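/- Let A be a normed unital algebra over ℂ, n ∈ ℕ, and let τ : A^{2n+1} → ℂ be a continuous (2n+1)-multilinear cyclic cocycle. Let p : ℝ → A be a differentiable path of idempotents, i.e. p(t)·p(t) = p(t) for all t ∈ ℝ. Then the function t ↦ τ(p(t), p(t), …, p(t)) (the value of τ on 2n+1 copies of p(t)) is constant on ℝ. -/

import Mathlib

/-- The Hochschild coboundary of a `(2n+1)`-multilinear functional `τ : A^{2n+1} → ℂ`:
`(bτ)(a₀, …, a_{2n+1}) = Σ_{i=0}^{2n} (−1)^i τ(a₀, …, aᵢ·a_{i+1}, …, a_{2n+1})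
  + (−1)^{2n+1} τ(a_{2n+1}·a₀, a₁, …, a_{2n})`. -/
noncomputable def hochschildCoboundary {A : Type*} [Ring A] (n : ℕ)
    (τ : (Fin (2 * n + 1) → A) → ℂ) (a : Fin (2 * n + 1 + 1) → A) : ℂ :=
  (∑ i : Fin (2 * n + 1), (-1 : ℂ) ^ (i : ℕ) *
      τ (fun j => if (j : ℕ) < (i : ℕ) then a j.castSucc
          else if (j : ℕ) = (i : ℕ) then a i.castSucc * a i.succ
          else a j.succ)) +
    (-1 : ℂ) ^ (2 * n + 1) *
      τ (fun j => if (j : ℕ) = 0 then a (Fin.last (2 * n + 1)) * a 0 else a j.castSucc)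

section aux

open Fin.NatCast Fin.CommRing

variable {A : Type*} [NormedRing A] [NormedAlgebra ℂ A] (n : ℕ)
  (τ : ContinuousMultilinearMap ℂ (fun _ : Fin (2 * n + 1) => A) ℂ)

/-- iterated cyclicity: rotation by `k` -/
lemma rot_aux (hcyclic : ∀ a : Fin (2 * n + 1) → A, τ (fun i => a (i - 1)) = τ a)
    (a : Fin (2 * n + 1) → A) (k : ℕ) :
    τ (fun i => a (i - (k : Fin (2 * n + 1)))) = τ a := by
  induction k with
  | zero => simp
  | succ k ih =>
    have h := hcyclic (fun i => a (i - (k : Fin (2 * n + 1))))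
    rw [← ih, ← h]
    congr 1; funext i
    congr 1
    push_cast
    ring

/-- put the distinguished argument in slot 0 -/
lemma slot_zero (hcyclic : ∀ a : Fin (2 * n + 1) → A, τ (fun i => a (i - 1)) = τ a)
    (q v : A) (i : Fin (2 * n + 1)) :
    τ (Function.update (fun _ => q) i v) = τ (Function.update (fun _ => q) 0 v) := by
  have h := rot_aux n τ hcyclic (Function.update (fun _ => q) 0 v) i.val
  rw [Fin.cast_val_eq_self] at h
  rw [← h]
  congr 1; funext j
  simp only [Function.update_apply, sub_eq_zero]

/-- the key consequence of the cocycle condition: `τ(xq, q, …, q) = τ(qx, q, …, q)`. -/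
lemma cocycle_swap (hcocycle : ∀ a : Fin (2 * n + 1 + 1) → A,
      hochschildCoboundary n (fun v => τ v) a = 0)
    (q x : A) (hq : q * q = q) :
    τ (Function.update (fun _ => q) 0 (x * q)) = τ (Function.update (fun _ => q) 0 (q * x)) := by
  set a : Fin (2*n+1+1) → A := Function.update (fun _ => q) 0 x with ha
  have h := hcocycle a
  unfold hochschildCoboundary at h
  rw [Fin.sum_univ_succ] at h
  have e0 : ∀ y : A, (fun j : Fin (2*n+1) => if (j:ℕ) = 0 then y else q) =
      Function.update (fun _ => q) 0 y := by
    intro y; funext j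
    simp only [Function.update_apply]
    by_cases hj : j = 0
    · simp [hj]
    · rw [if_neg hj, if_neg (fun h => hj (Fin.ext (by rw [h]; simp)))]
  -- first term : τ (update c 0 (x * q))
  have ht0 : (fun j : Fin (2*n+1) =>
      if (j:ℕ) < ((0 : Fin (2*n+1)):ℕ) then a j.castSucc
      else if (j:ℕ) = ((0 : Fin (2*n+1)):ℕ) then
        a (Fin.castSucc 0) * a (Fin.succ 0)
      else a j.succ) =
      Function.update (fun _ => q) 0 (x * q) := by
    funext j
    simp only [ha, Function.update_apply, Fin.ext_iff, Fin.val_zero, Fin.val_succ,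
      Fin.coe_castSucc, Fin.castSucc_zero, Fin.val_last]
    split_ifs <;> first | rfl | omega | exact hq | exact ‹False›.elim
  -- middle terms: τ (update c 0 x)
  have htm : ∀ i : Fin (2*n), (fun j : Fin (2*n+1) =>
      if (j:ℕ) < ((i.succ : Fin (2*n+1)):ℕ) then a j.castSucc
      else if (j:ℕ) = ((i.succ : Fin (2*n+1)):ℕ) then
        a (Fin.castSucc i.succ) * a (Fin.succ i.succ)
      else a j.succ) =
      Function.update (fun _ => q) 0 x := by
    intro i
    funext j
    simp only [ha, Function.update_apply, Fin.ext_iff, Fin.val_zero, Fin.val_succ,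
      Fin.coe_castSucc, Fin.castSucc_zero, Fin.val_last]
    split_ifs <;> first | rfl | omega | exact hq | exact ‹False›.elim
  -- last term
  have htl : (fun j : Fin (2*n+1) =>
      if (j:ℕ) = 0 then a (Fin.last (2*n+1)) * a 0
      else a j.castSucc) =
      Function.update (fun _ => q) 0 (q * x) := by
    funext j
    simp only [ha, Function.update_apply, Fin.ext_iff, Fin.val_zero, Fin.val_succ,
      Fin.coe_castSucc, Fin.castSucc_zero, Fin.val_last]
    split_ifs <;> first | rfl | omega | exact hq | exact ‹False›.elim
  rw [ht0] at h
  simp only [htm] at h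
  rw [htl] at h
  rw [← Finset.sum_mul] at h
  have hsum : (∑ i : Fin (2*n), (-1:ℂ) ^ ((i.succ : Fin (2*n+1)):ℕ)) = 0 := by
    have : ∀ i : Fin (2*n), (-1:ℂ) ^ ((i.succ : Fin (2*n+1)):ℕ) = -(-1:ℂ)^(i:ℕ) := by
      intro i; rw [Fin.val_succ, pow_succ]; ring
    rw [Finset.sum_congr rfl (fun i _ => this i), Finset.sum_neg_distrib]
    rw [Fin.sum_univ_eq_sum_range (fun i => (-1:ℂ)^i), neg_one_geom_sum]
    simp [Nat.even_mul]
  rw [hsum, zero_mul] at h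
  have hodd : (-1:ℂ) ^ (2*n+1) = -1 := Odd.neg_one_pow ⟨n, by ring⟩
  rw [hodd] at h
  simp only [Fin.val_zero, pow_zero, one_mul] at h
  linear_combination h

end aux

/-- Let `A` be a normed unital algebra over `ℂ` and `τ` a continuous
`(2n+1)`-multilinear cyclic cocycle on `A`.  If `p : ℝ → A` is a differentiable path of
idempotents, then `t ↦ τ(p t, …, p t)` is constant on `ℝ`. -/
theorem stmt3 {A : Type*} [NormedRing A] [NormedAlgebra ℂ A] (n : ℕ)
    (τ : ContinuousMultilinearMap ℂ (fun _ : Fin (2 * n + 1) => A) ℂ)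
    (hcyclic : ∀ a : Fin (2 * n + 1) → A, τ (fun i => a (i - 1)) = τ a)
    (hcocycle : ∀ a : Fin (2 * n + 1 + 1) → A,
      hochschildCoboundary n (fun v => τ v) a = 0)
    (p : ℝ → A) (hdiff : Differentiable ℝ p)
    (hidem : ∀ t : ℝ, p t * p t = p t) (s t : ℝ) :
    τ (fun _ => p s) = τ (fun _ => p t) := by
  set f : ℝ → ℂ := fun t => τ (fun _ => p t) with hf
  suffices h : ∀ u : ℝ, HasDerivAt f 0 u by
    exact is_const_of_deriv_eq_zero (fun u => (h u).differentiableAt)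
      (fun u => (h u).deriv) s t
  intro u
  set d : A := deriv p u with hd
  have hp : HasDerivAt p d u := (hdiff u).hasDerivAt
  -- Leibniz p' = p' p + p p'
  have hleib : d = d * p u + p u * d := by
    have h1 : HasDerivAt (fun t => p t * p t) (d * p u + p u * d) u := hp.mul hp
    have h2 : (fun t => p t * p t) = p := funext hidem
    rw [h2] at h1
    exact hp.unique h1
  have hpdp : p u * d * p u = 0 := by
    have := congrArg (fun y => p u * y) hleib
    simp only [mul_add, ← mul_assoc, hidem u] at this
    exact right_eq_add.mp this
  set q : A := p u with hqdef
  have hq : q * q = q := hidem u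
  set c : Fin (2 * n + 1) → A := fun _ => q with hc
  -- τ (update c 0 d) = 0
  have hkey : ∀ x : A, τ (Function.update c 0 (x * q)) = τ (Function.update c 0 (q * x)) :=
    fun x => cocycle_swap n τ hcocycle q x hq
  have hdq : τ (Function.update c 0 (d * q)) = 0 := by
    have h1 := hkey (d * q)
    rw [mul_assoc, hq] at h1
    rw [h1, ← mul_assoc, hpdp]
    exact τ.map_coord_zero 0 (by simp)
  have hz : τ (Function.update c 0 d) = 0 := by
    have h1 : τ (Function.update c 0 d) = τ (Function.update c 0 (d * q + q * d)) := by
      rw [← hleib]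
    rw [h1, τ.map_update_add, hdq, ← hkey d, hdq, add_zero]
  -- the derivative of f at u
  have hg : HasDerivAt (fun t => (fun _ : Fin (2 * n + 1) => p t)) (fun _ => d) u :=
    hasDerivAt_pi.mpr (fun _ => hp)
  have hτ : HasFDerivAt (⇑τ) (τ.linearDeriv c) c := τ.hasFDerivAt c
  have hcomp := ((hτ.restrictScalars ℝ).comp_hasDerivAt u hg :)
  have hval : (ContinuousLinearMap.restrictScalars ℝ (τ.linearDeriv c)) (fun _ => d) = 0 := by
    rw [ContinuousLinearMap.coe_restrictScalars', ContinuousMultilinearMap.linearDeriv_apply]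
    calc (∑ i : Fin (2 * n + 1), τ (Function.update c i ((fun _ => d) i)))
        = ∑ _i : Fin (2 * n + 1), τ (Function.update c 0 d) :=
          Finset.sum_congr rfl (fun i _ => slot_zero n τ hcyclic q d i)
      _ = 0 := by rw [hz]; simp
  rw [hval] at hcomp
  exact hcomp
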